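/- Let (Ω, ℱ, μ) be a probability space with a filtration (ℱ_n)_{n≥0}, let D ⊆ ℝ^K be a nonempty closed convex set, and let (c_n)_{n≥1} be a sequence of random vectors in ℝ^K with c_n ℱ_n-measurable and ‖c_n‖ ≤ 1 almost surely for all n. Define the average x_n := (1/n)·∑_{m=1}^{n} c_m (so that x_{n+1} = x_n + (1/(n+1))·(c_{n+1} − x_n)). Suppose the Blackwell drift condition holds: for every n ≥ 1, almost surely ⟨E[c_{n+1} | ℱ_n] − P_D(x_n), x_n − P_D(x_n)⟩ ≤ 0. Then infDist(x_n, D) → 0 almost surely as n → ∞. -/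

import Mathlib

open Filter Topology MeasureTheory Metric
open scoped RealInnerProductSpace

set_option maxHeartbeats 1600000


lemma euclid_coord_le {K : ℕ} (v : EuclideanSpace ℝ (Fin K)) (i : Fin K) : |v i| ≤ ‖v‖ := by
  rw [EuclideanSpace.norm_eq, ← Real.sqrt_sq (abs_nonneg (v i))]
  apply Real.sqrt_le_sqrt
  have := Finset.single_le_sum (f := fun j => ‖v j‖ ^ 2) (fun j _ => sq_nonneg _)
    (Finset.mem_univ i)
  simpa [Real.norm_eq_abs, sq_abs] using this

lemma euclid_inner_eq {K : ℕ} (u v : EuclideanSpace ℝ (Fin K)) :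
    ⟪u, v⟫ = ∑ i, u i * v i := by
  simp [PiLp.inner_apply, RCLike.inner_apply, mul_comm]

lemma condexp_clm {α : Type*} {m m0 : MeasurableSpace α} (hm : m ≤ m0) {μ : Measure α}
    [IsFiniteMeasure μ] {E F : Type*} [NormedAddCommGroup E] [NormedSpace ℝ E] [CompleteSpace E]
    [NormedAddCommGroup F] [NormedSpace ℝ F] [CompleteSpace F]
    (T : E →L[ℝ] F) {f : α → E} (hf : Integrable f μ) :
    (fun ω => T ((μ[f|m]) ω)) =ᵐ[μ] μ[fun ω => T (f ω)|m] := by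
  refine ae_eq_condExp_of_forall_setIntegral_eq hm (T.integrable_comp hf)
    (fun s _ _ => (T.integrable_comp integrable_condExp).integrableOn)
    (fun s hs hμs => ?_)
    ((T.continuous.comp_stronglyMeasurable stronglyMeasurable_condExp).aestronglyMeasurable)
  rw [T.integral_comp_comm integrable_condExp.integrableOn,
    T.integral_comp_comm hf.integrableOn, setIntegral_condExp hm hf hs]

lemma integral_inner_condexp {K : ℕ} {Ω : Type*} {m m0 : MeasurableSpace Ω} (hm : m ≤ m0)
    {μ : Measure Ω} [IsProbabilityMeasure μ]
    {f V : Ω → EuclideanSpace ℝ (Fin K)} (hf : Integrable f μ)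
    (hVm : StronglyMeasurable[m] V) {b : ℝ} (hVb : ∀ᵐ ω ∂μ, ‖V ω‖ ≤ b) :
    ∫ ω, ⟪f ω, V ω⟫ ∂μ = ∫ ω, ⟪(μ[f|m]) ω, V ω⟫ ∂μ := by
  have hVmeas : ∀ i, StronglyMeasurable[m] fun ω => V ω i :=
    fun i => ((EuclideanSpace.proj (𝕜 := ℝ) i).continuous.comp_stronglyMeasurable hVm)
  have hVib : ∀ i : Fin K, ∀ᵐ ω ∂μ, ‖V ω i‖ ≤ b := by
    intro i
    filter_upwards [hVb] with ω hω
    exact le_trans (by simpa [Real.norm_eq_abs] using euclid_coord_le (V ω) i) hω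
  have hfi : ∀ i : Fin K, Integrable (fun ω => f ω i) μ :=
    fun i => (EuclideanSpace.proj (𝕜 := ℝ) i).integrable_comp hf
  have hint1 : ∀ i : Fin K, Integrable (fun ω => f ω i * V ω i) μ := by
    intro i
    have := (hfi i).bdd_mul ((hVmeas i).mono hm).aestronglyMeasurable (hVib i)
    simpa [mul_comm] using this
  have hint2 : ∀ i : Fin K, Integrable (fun ω => (μ[f|m]) ω i * V ω i) μ := by
    intro i
    have := ((EuclideanSpace.proj (𝕜 := ℝ) i).integrable_comp
      (integrable_condExp (m := m) (f := f) (μ := μ))).bdd_mul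
      ((hVmeas i).mono hm).aestronglyMeasurable (hVib i)
    simpa [mul_comm] using this
  simp_rw [euclid_inner_eq]
  rw [integral_finset_sum _ fun i _ => hint1 i, integral_finset_sum _ fun i _ => hint2 i]
  refine Finset.sum_congr rfl fun i _ => ?_
  have hcoord : (fun ω => (μ[f|m]) ω i) =ᵐ[μ] μ[fun ω => f ω i|m] :=
    condexp_clm hm (EuclideanSpace.proj (𝕜 := ℝ) i) hf
  have hmul : μ[(fun ω => V ω i) * (fun ω => f ω i)|m]
      =ᵐ[μ] (fun ω => V ω i) * μ[fun ω => f ω i|m] :=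
    condExp_stronglyMeasurable_mul_of_bound hm (hVmeas i) (hfi i) b (hVib i)
  calc ∫ ω, f ω i * V ω i ∂μ = ∫ ω, ((fun ω => V ω i) * fun ω => f ω i) ω ∂μ := by
        refine integral_congr_ae ?_; filter_upwards with ω; simp [mul_comm]
    _ = ∫ ω, (μ[(fun ω => V ω i) * (fun ω => f ω i)|m]) ω ∂μ :=
        (integral_condExp hm).symm
    _ = ∫ ω, ((fun ω => V ω i) * μ[fun ω => f ω i|m]) ω ∂μ := integral_congr_ae hmul
    _ = ∫ ω, (μ[f|m]) ω i * V ω i ∂μ := by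
        refine integral_congr_ae ?_
        filter_upwards [hcoord] with ω hω
        simp [hω, mul_comm]

lemma integrable_inner_bdd {Ω : Type*} {m0 : MeasurableSpace Ω} {μ : Measure Ω} {E : Type*}
    [NormedAddCommGroup E] [InnerProductSpace ℝ E] {f V : Ω → E} (hf : Integrable f μ)
    (hV : AEStronglyMeasurable V μ) {b : ℝ} (hVb : ∀ᵐ ω ∂μ, ‖V ω‖ ≤ b) :
    Integrable (fun ω => ⟪f ω, V ω⟫) μ := by
  refine Integrable.mono' (hf.norm.mul_const b) (hf.aestronglyMeasurable.inner hV) ?_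
  filter_upwards [hVb] with ω hω
  calc ‖⟪f ω, V ω⟫‖ = |⟪f ω, V ω⟫| := Real.norm_eq_abs _
    _ ≤ ‖f ω‖ * ‖V ω‖ := abs_real_inner_le_norm _ _
    _ ≤ ‖f ω‖ * b := mul_le_mul_of_nonneg_left hω (norm_nonneg _)

lemma proj_iInf {K : ℕ} {D : Set (EuclideanSpace ℝ (Fin K))}
    {P : EuclideanSpace ℝ (Fin K) → EuclideanSpace ℝ (Fin K)}
    (hP : ∀ y, P y ∈ D ∧ ∀ z ∈ D, dist y (P y) ≤ dist y z) (y : EuclideanSpace ℝ (Fin K)) :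
    ‖y - P y‖ = ⨅ w : D, ‖y - (w : EuclideanSpace ℝ (Fin K))‖ := by
  haveI hne : Nonempty D := ⟨⟨P y, (hP y).1⟩⟩
  refine le_antisymm (le_ciInf fun w => ?_) ?_
  · have h := (hP y).2 w w.2
    rwa [dist_eq_norm, dist_eq_norm] at h
  · have hbdd : BddBelow (Set.range fun w : D => ‖y - (w : EuclideanSpace ℝ (Fin K))‖) := by
      refine ⟨0, ?_⟩
      rintro r ⟨w, rfl⟩
      positivity
    exact ciInf_le hbdd ⟨P y, (hP y).1⟩

lemma proj_infDist {K : ℕ} {D : Set (EuclideanSpace ℝ (Fin K))}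
    {P : EuclideanSpace ℝ (Fin K) → EuclideanSpace ℝ (Fin K)}
    (hP : ∀ y, P y ∈ D ∧ ∀ z ∈ D, dist y (P y) ≤ dist y z) (y : EuclideanSpace ℝ (Fin K)) :
    infDist y D = ‖y - P y‖ := by
  rw [infDist_eq_iInf, proj_iInf hP y]
  simp_rw [dist_eq_norm]

lemma proj_var {K : ℕ} {D : Set (EuclideanSpace ℝ (Fin K))} (hconv : Convex ℝ D)
    {P : EuclideanSpace ℝ (Fin K) → EuclideanSpace ℝ (Fin K)}
    (hP : ∀ y, P y ∈ D ∧ ∀ z ∈ D, dist y (P y) ≤ dist y z) (y : EuclideanSpace ℝ (Fin K)) :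
    ∀ z ∈ D, ⟪y - P y, z - P y⟫ ≤ 0 := by
  exact (norm_eq_iInf_iff_real_inner_le_zero hconv (hP y).1).1 (proj_iInf hP y)

lemma proj_lip {K : ℕ} {D : Set (EuclideanSpace ℝ (Fin K))} (hconv : Convex ℝ D)
    {P : EuclideanSpace ℝ (Fin K) → EuclideanSpace ℝ (Fin K)}
    (hP : ∀ y, P y ∈ D ∧ ∀ z ∈ D, dist y (P y) ≤ dist y z) :
    LipschitzWith 1 P := by
  refine LipschitzWith.of_dist_le_mul fun y z => ?_
  rw [NNReal.coe_one, one_mul, dist_eq_norm, dist_eq_norm]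
  have h1 := proj_var hconv hP y (P z) (hP z).1
  have h2 := proj_var hconv hP z (P y) (hP y).1
  have hkey : ‖P y - P z‖ ^ 2 ≤ ⟪y - z, P y - P z⟫ := by
    have e1 : ⟪y - P y, P z - P y⟫ = -⟪y - P y, P y - P z⟫ := by
      rw [← inner_neg_right]; congr 1; abel
    have e2 : ⟪z - P z, P y - P z⟫ ≤ 0 := h2
    have expand : ⟪y - z, P y - P z⟫ - ‖P y - P z‖ ^ 2
        = ⟪y - P y, P y - P z⟫ - ⟪z - P z, P y - P z⟫ := by
      rw [← real_inner_self_eq_norm_sq, ← inner_sub_left, ← inner_sub_left]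
      congr 1
      abel
    nlinarith [h1, e1, e2, expand]
  have hc := real_inner_le_norm (y - z) (P y - P z)
  nlinarith [norm_nonneg (P y - P z), norm_nonneg (y - z), hkey, hc]

theorem stmt15 {K : ℕ} {Ω : Type*} {mΩ : MeasurableSpace Ω} (μ : Measure Ω)
    [IsProbabilityMeasure μ] (ℱ : Filtration ℕ mΩ)
    (D : Set (EuclideanSpace ℝ (Fin K)))
    (hne : D.Nonempty) (hcl : IsClosed D) (hconv : Convex ℝ D)
    (P : EuclideanSpace ℝ (Fin K) → EuclideanSpace ℝ (Fin K))
    (hP : ∀ y, P y ∈ D ∧ ∀ z ∈ D, dist y (P y) ≤ dist y z)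
    (c : ℕ → Ω → EuclideanSpace ℝ (Fin K))
    (hmeas : ∀ n, StronglyMeasurable[ℱ n] (c n))
    (hbdd : ∀ n, 1 ≤ n → ∀ᵐ ω ∂μ, ‖c n ω‖ ≤ 1)
    (x : ℕ → Ω → EuclideanSpace ℝ (Fin K))
    (hx : ∀ n ω, x n ω = ((n : ℝ)⁻¹) • ∑ m ∈ Finset.Icc 1 n, c m ω)
    (hdrift : ∀ n, 1 ≤ n → ∀ᵐ ω ∂μ,
      ⟪(μ[c (n + 1) | ℱ n]) ω - P (x n ω), x n ω - P (x n ω)⟫ ≤ 0) :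
    ∀ᵐ ω ∂μ, Tendsto (fun n => infDist (x n ω) D) atTop (𝓝 0) := by
  classical
  obtain ⟨z₀, hz₀⟩ := hne
  set Q : ℝ := 1 + ‖z₀‖ with hQdef
  have hQ0 : 0 < Q := by positivity
  have hPD : ∀ y, P y ∈ D := fun y => (hP y).1
  have hproj : ∀ y, infDist y D = ‖y - P y‖ := proj_infDist hP
  have hPlip : LipschitzWith 1 P := proj_lip hconv hP
  -- measurability of x
  have hxm : ∀ n, StronglyMeasurable[ℱ n] (x n) := by
    intro n
    have : x n = fun ω => ((n : ℝ)⁻¹) • ∑ m ∈ Finset.Icc 1 n, c m ω := funext (hx n)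
    rw [this]
    refine StronglyMeasurable.const_smul (f := fun ω => ∑ m ∈ Finset.Icc 1 n, c m ω) ?_ ((n : ℝ)⁻¹)
    refine Finset.stronglyMeasurable_fun_sum _ fun m hm => ?_
    exact (hmeas m).mono (ℱ.mono (Finset.mem_Icc.1 hm).2)
  have hxm0 : ∀ n, StronglyMeasurable (x n) := fun n => (hxm n).mono (ℱ.le n)
  set d : ℕ → Ω → ℝ := fun n ω => infDist (x n ω) D with hdDef
  have hdm : ∀ n, StronglyMeasurable (d n) :=
    fun n => (continuous_infDist_pt D).comp_stronglyMeasurable (hxm0 n)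
  have hd0 : ∀ n ω, 0 ≤ d n ω := fun n ω => infDist_nonneg
  have hd2meas : ∀ n, StronglyMeasurable (fun ω => d n ω ^ 2) :=
    fun n => (continuous_pow 2).comp_stronglyMeasurable (hdm n)
  -- good set
  have hG : ∀ᵐ ω ∂μ, ∀ m, 1 ≤ m → ‖c m ω‖ ≤ 1 := by
    have h := ae_all_iff.2 fun m : ℕ => hbdd (m + 1) (by omega)
    filter_upwards [h] with ω hω m hm
    obtain ⟨k, rfl⟩ := Nat.exists_eq_add_of_le hm
    have := hω k
    simpa [Nat.add_comm] using this
  -- recursion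
  have hrec : ∀ n ω, x (n + 1) ω = x n ω + ((n : ℝ) + 1)⁻¹ • (c (n + 1) ω - x n ω) := by
    intro n ω
    rw [hx, hx, Finset.sum_Icc_succ_top (by omega : 1 ≤ n + 1)]
    rcases Nat.eq_zero_or_pos n with hn | hn
    · subst hn; simp
    · have hn' : (n : ℝ) ≠ 0 := Nat.cast_ne_zero.2 hn.ne'
      have hn1 : (n : ℝ) + 1 ≠ 0 := by positivity
      push_cast
      match_scalars <;> field_simp <;> ring
  -- norm bounds
  have hxb : ∀ ω, (∀ m, 1 ≤ m → ‖c m ω‖ ≤ 1) → ∀ n, ‖x n ω‖ ≤ 1 := by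
    intro ω h n
    rcases Nat.eq_zero_or_pos n with hn | hn
    · subst hn; simp [hx]
    · rw [hx, norm_smul, Real.norm_eq_abs, abs_of_nonneg (by positivity)]
      have h1 : ‖∑ m ∈ Finset.Icc 1 n, c m ω‖ ≤ ∑ m ∈ Finset.Icc 1 n, (1 : ℝ) := by
        refine (norm_sum_le _ _).trans (Finset.sum_le_sum fun m hm => ?_)
        exact h m (Finset.mem_Icc.1 hm).1
      have h2 : ∑ m ∈ Finset.Icc 1 n, (1 : ℝ) = (n : ℝ) := by
        simp [Nat.card_Icc]
      rw [h2] at h1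
      calc ((n : ℝ))⁻¹ * ‖∑ m ∈ Finset.Icc 1 n, c m ω‖ ≤ ((n : ℝ))⁻¹ * n := by
            refine mul_le_mul_of_nonneg_left h1 (by positivity)
        _ = 1 := by field_simp
  have hdb : ∀ ω, (∀ m, 1 ≤ m → ‖c m ω‖ ≤ 1) → ∀ n, d n ω ≤ Q := by
    intro ω h n
    calc d n ω ≤ dist (x n ω) z₀ := infDist_le_dist_of_mem hz₀
      _ = ‖x n ω - z₀‖ := dist_eq_norm _ _
      _ ≤ ‖x n ω‖ + ‖z₀‖ := norm_sub_le _ _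
      _ ≤ 1 + ‖z₀‖ := by linarith [hxb ω h n]
  -- integrability of d^2, definition of A
  have hd2int : ∀ n, Integrable (fun ω => d n ω ^ 2) μ := by
    intro n
    refine Integrable.mono' (integrable_const (Q ^ 2)) (hd2meas n).aestronglyMeasurable ?_
    filter_upwards [hG] with ω hω
    rw [Real.norm_eq_abs, abs_of_nonneg (sq_nonneg _)]
    exact pow_le_pow_left₀ (hd0 n ω) (hdb ω hω n) 2
  set A : ℕ → ℝ := fun n => ∫ ω, d n ω ^ 2 ∂μ with hAdef
  have hA0 : ∀ n, 0 ≤ A n := fun n => integral_nonneg fun ω => sq_nonneg _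
  have hAB : ∀ n, A n ≤ Q ^ 2 := by
    intro n
    have := integral_mono_ae (hd2int n) (integrable_const (Q ^ 2)) ?_
    · simpa using this
    · filter_upwards [hG] with ω hω
      exact pow_le_pow_left₀ (hd0 n ω) (hdb ω hω n) 2
  -- main one-step inequality
  have hstep : ∀ n, 1 ≤ n →
      A (n + 1) ≤ (1 - 2 * ((n : ℝ) + 1)⁻¹) * A n + 4 * (((n : ℝ) + 1)⁻¹) ^ 2 := by
    intro n hn
    set γ : ℝ := ((n : ℝ) + 1)⁻¹ with hγdef
    have hγ0 : (0 : ℝ) ≤ γ := by positivity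
    set V : Ω → EuclideanSpace ℝ (Fin K) := fun ω => x n ω - P (x n ω) with hVdef
    have hVm : StronglyMeasurable[ℱ n] V :=
      (hxm n).sub (hPlip.continuous.comp_stronglyMeasurable (hxm n))
    have hVb : ∀ᵐ ω ∂μ, ‖V ω‖ ≤ Q := by
      filter_upwards [hG] with ω hω
      have h1 := hdb ω hω n
      have h2 : d n ω = ‖V ω‖ := hproj (x n ω)
      linarith [h2 ▸ h1]
    have hcint : Integrable (c (n + 1)) μ := by
      refine Integrable.mono' (integrable_const 1)
        ((hmeas (n + 1)).mono (ℱ.le (n + 1))).aestronglyMeasurable ?_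
      exact hbdd (n + 1) (by omega)
    have hint1 : Integrable (fun ω => ⟪c (n + 1) ω, V ω⟫) μ :=
      integrable_inner_bdd hcint ((hVm.mono (ℱ.le n)).aestronglyMeasurable) hVb
    have hint2 : Integrable (fun ω => ⟪(μ[c (n + 1) | ℱ n]) ω, V ω⟫) μ :=
      integrable_inner_bdd integrable_condExp ((hVm.mono (ℱ.le n)).aestronglyMeasurable) hVb
    have hM0 : ∫ ω, (⟪c (n + 1) ω, V ω⟫ - ⟪(μ[c (n + 1) | ℱ n]) ω, V ω⟫) ∂μ = 0 := by
      rw [integral_sub hint1 hint2, integral_inner_condexp (ℱ.le n) hcint hVm hVb, sub_self]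
    have hkey : ∀ᵐ ω ∂μ, d (n + 1) ω ^ 2 ≤
        (1 - 2 * γ) * d n ω ^ 2
          + 2 * γ * (⟪c (n + 1) ω, V ω⟫ - ⟪(μ[c (n + 1) | ℱ n]) ω, V ω⟫) + 4 * γ ^ 2 := by
      filter_upwards [hG, hdrift n hn] with ω hGω hdr
      have hy1 : ‖x n ω‖ ≤ 1 := hxb ω hGω n
      have hc1 : ‖c (n + 1) ω‖ ≤ 1 := hGω (n + 1) (by omega)
      have hdn : d n ω = ‖V ω‖ := hproj (x n ω)
      have hxs : x (n + 1) ω - P (x n ω) = V ω + γ • (c (n + 1) ω - x n ω) := by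
        rw [hrec n ω, ← hγdef]
        exact add_sub_right_comm _ _ _
      have h1 : d (n + 1) ω ≤ ‖V ω + γ • (c (n + 1) ω - x n ω)‖ := by
        calc d (n + 1) ω ≤ dist (x (n + 1) ω) (P (x n ω)) := infDist_le_dist_of_mem (hPD _)
          _ = ‖x (n + 1) ω - P (x n ω)‖ := dist_eq_norm _ _
          _ = _ := by rw [hxs]
      have h2 : d (n + 1) ω ^ 2 ≤ ‖V ω + γ • (c (n + 1) ω - x n ω)‖ ^ 2 :=
        pow_le_pow_left₀ (hd0 _ _) h1 2
      have hexp : ‖V ω + γ • (c (n + 1) ω - x n ω)‖ ^ 2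
          = ‖V ω‖ ^ 2 + 2 * (γ * ⟪V ω, c (n + 1) ω - x n ω⟫)
            + γ ^ 2 * ‖c (n + 1) ω - x n ω‖ ^ 2 := by
        rw [norm_add_sq_real, real_inner_smul_right, norm_smul, Real.norm_eq_abs,
          abs_of_nonneg hγ0, mul_pow]
      have hw2 : ‖c (n + 1) ω - x n ω‖ ≤ 2 := by
        calc ‖c (n + 1) ω - x n ω‖ ≤ ‖c (n + 1) ω‖ + ‖x n ω‖ := norm_sub_le _ _
          _ ≤ 2 := by linarith
      have hdr' : ⟪(μ[c (n + 1) | ℱ n]) ω, V ω⟫ - ⟪P (x n ω), V ω⟫ ≤ 0 := by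
        have h := hdr
        rw [inner_sub_left] at h
        exact h
      have hvw : ⟪V ω, c (n + 1) ω - x n ω⟫ = ⟪c (n + 1) ω, V ω⟫ - ⟪x n ω, V ω⟫ := by
        rw [inner_sub_right, real_inner_comm (V ω) (c (n + 1) ω), real_inner_comm (V ω) (x n ω)]
      have hnv : ⟪x n ω, V ω⟫ = ‖V ω‖ ^ 2 + ⟪P (x n ω), V ω⟫ := by
        rw [← real_inner_self_eq_norm_sq, hVdef]
        simp only [inner_sub_left]
        ring
      have p1 : 2 * γ * (⟪(μ[c (n + 1) | ℱ n]) ω, V ω⟫ - ⟪P (x n ω), V ω⟫) ≤ 0 :=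
        mul_nonpos_of_nonneg_of_nonpos (by positivity) hdr'
      have p2 : γ ^ 2 * ‖c (n + 1) ω - x n ω‖ ^ 2 ≤ γ ^ 2 * 4 :=
        mul_le_mul_of_nonneg_left (by nlinarith [norm_nonneg (c (n + 1) ω - x n ω)]) (sq_nonneg γ)
      have p3 : γ * ⟪V ω, c (n + 1) ω - x n ω⟫
          = γ * ⟪c (n + 1) ω, V ω⟫ - γ * ‖V ω‖ ^ 2 - γ * ⟪P (x n ω), V ω⟫ := by
        rw [hvw, hnv]; ring
      have p4 : γ * ⟪(μ[c (n + 1) | ℱ n]) ω, V ω⟫ - γ * ⟪P (x n ω), V ω⟫ ≤ 0 := by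
        nlinarith [p1]
      rw [hdn]
      nlinarith [h2, hexp, p2, p3, p4]
    -- integrate
    have hMint : Integrable (fun ω => ⟪c (n + 1) ω, V ω⟫ - ⟪(μ[c (n + 1) | ℱ n]) ω, V ω⟫) μ :=
      hint1.sub hint2
    have hf1 : Integrable (fun ω => (1 - 2 * γ) * d n ω ^ 2
        + 2 * γ * (⟪c (n + 1) ω, V ω⟫ - ⟪(μ[c (n + 1) | ℱ n]) ω, V ω⟫)) μ :=
      ((hd2int n).const_mul _).add (hMint.const_mul _)
    have hRint : Integrable (fun ω => (1 - 2 * γ) * d n ω ^ 2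
        + 2 * γ * (⟪c (n + 1) ω, V ω⟫ - ⟪(μ[c (n + 1) | ℱ n]) ω, V ω⟫) + 4 * γ ^ 2) μ :=
      hf1.add (integrable_const _)
    have hmono := integral_mono_ae (hd2int (n + 1)) hRint hkey
    have hcalc : ∫ ω, ((1 - 2 * γ) * d n ω ^ 2
        + 2 * γ * (⟪c (n + 1) ω, V ω⟫ - ⟪(μ[c (n + 1) | ℱ n]) ω, V ω⟫) + 4 * γ ^ 2) ∂μ
        = (1 - 2 * γ) * A n + 4 * γ ^ 2 := by
      rw [integral_add hf1 (integrable_const _),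
        integral_add ((hd2int n).const_mul _) (hMint.const_mul _),
        integral_const_mul, integral_const_mul, hM0]
      simp [hAdef]
    rw [hcalc] at hmono
    exact hmono
  -- bound on A
  have hAn : ∀ n : ℕ, 1 ≤ n → (n : ℝ) ^ 2 * A n ≤ Q ^ 2 + 4 * n := by
    intro n hn
    induction n, hn using Nat.le_induction with
    | base => have := hAB 1; push_cast; nlinarith
    | succ n hn ih =>
      have h := hstep n hn
      have ht : (1 : ℝ) ≤ (n : ℝ) := by exact_mod_cast hn
      have hne1 : (n : ℝ) + 1 ≠ 0 := by positivity
      have e1 : ((n : ℝ) + 1) ^ 2 * ((1 - 2 * ((n : ℝ) + 1)⁻¹) * A n + 4 * (((n : ℝ) + 1)⁻¹) ^ 2)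
          = ((n : ℝ) ^ 2 - 1) * A n + 4 := by
        field_simp
        ring
      push_cast
      nlinarith [hA0 n, ih, mul_le_mul_of_nonneg_left h (by positivity : (0:ℝ) ≤ ((n : ℝ) + 1) ^ 2)]
  -- summable bound along squares
  set u : ℕ → ℝ := fun k => Q ^ 2 * (1 / ((k : ℝ) + 1) ^ 4) + 4 * (1 / ((k : ℝ) + 1) ^ 2)
    with hudef
  have hu_nonneg : ∀ k, 0 ≤ u k := fun k => by positivity
  have hu : Summable u := by
    have s2 : Summable (fun k : ℕ => 1 / ((k : ℝ) + 1) ^ 2) := by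
      have := (summable_nat_add_iff 1).2 (Real.summable_one_div_nat_pow.2 (by norm_num : 2 ≤ 2))
      simpa [add_comm] using this
    have s4 : Summable (fun k : ℕ => 1 / ((k : ℝ) + 1) ^ 4) := by
      have := (summable_nat_add_iff 1).2 (Real.summable_one_div_nat_pow.2 (by norm_num : 2 ≤ 4))
      simpa [add_comm] using this
    exact (s4.mul_left _).add (s2.mul_left _)
  have hAfin : ∀ k : ℕ, A ((k + 1) ^ 2) ≤ u k := by
    intro k
    have h1 : 1 ≤ (k + 1) ^ 2 := Nat.one_le_pow _ _ (by omega)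
    have h := hAn ((k + 1) ^ 2) h1
    have hs : (0 : ℝ) < ((k : ℝ) + 1) := by positivity
    have hcast : (((k + 1) ^ 2 : ℕ) : ℝ) = ((k : ℝ) + 1) ^ 2 := by push_cast; ring
    rw [hcast] at h
    have h' : ((k : ℝ) + 1) ^ 4 * A ((k + 1) ^ 2) ≤ Q ^ 2 + 4 * ((k : ℝ) + 1) ^ 2 := by
      nlinarith [h]
    simp only [hudef]
    have he : Q ^ 2 * (1 / ((k : ℝ) + 1) ^ 4) + 4 * (1 / ((k : ℝ) + 1) ^ 2)
        = (Q ^ 2 + 4 * ((k : ℝ) + 1) ^ 2) / ((k : ℝ) + 1) ^ 4 := by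
      field_simp
    rw [he, le_div_iff₀ (by positivity)]
    nlinarith [h']
  -- a.s. convergence along squares
  have hsub : ∀ᵐ ω ∂μ, Tendsto (fun k => d ((k + 1) ^ 2) ω) atTop (𝓝 0) := by
    have hFmeas : ∀ k : ℕ, AEMeasurable (fun ω => ENNReal.ofReal (d ((k + 1) ^ 2) ω ^ 2)) μ :=
      fun k => ((hd2meas ((k + 1) ^ 2)).measurable.ennreal_ofReal).aemeasurable
    have hlim : ∫⁻ ω, ∑' k, ENNReal.ofReal (d ((k + 1) ^ 2) ω ^ 2) ∂μ ≠ ⊤ := by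
      rw [lintegral_tsum hFmeas]
      have heq : ∀ k : ℕ, ∫⁻ ω, ENNReal.ofReal (d ((k + 1) ^ 2) ω ^ 2) ∂μ
          = ENNReal.ofReal (A ((k + 1) ^ 2)) := fun k =>
        (ofReal_integral_eq_lintegral_ofReal (hd2int _)
          (Filter.Eventually.of_forall fun ω => sq_nonneg _)).symm
      refine ne_of_lt (lt_of_le_of_lt ?_ (ENNReal.ofReal_lt_top : ENNReal.ofReal (∑' k, u k) < ⊤))
      calc ∑' k, ∫⁻ ω, ENNReal.ofReal (d ((k + 1) ^ 2) ω ^ 2) ∂μ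
          = ∑' k, ENNReal.ofReal (A ((k + 1) ^ 2)) := tsum_congr heq
        _ ≤ ∑' k, ENNReal.ofReal (u k) :=
            ENNReal.tsum_le_tsum fun k => ENNReal.ofReal_le_ofReal (hAfin k)
        _ = ENNReal.ofReal (∑' k, u k) := (ENNReal.ofReal_tsum_of_nonneg hu_nonneg hu).symm
    have h2 := ae_lt_top' (AEMeasurable.ennreal_tsum hFmeas) hlim
    filter_upwards [h2] with ω hω
    have hsummable : Summable fun k => (ENNReal.ofReal (d ((k + 1) ^ 2) ω ^ 2)).toReal :=
      ENNReal.summable_toReal hω.ne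
    have hsummable' : Summable fun k => d ((k + 1) ^ 2) ω ^ 2 := by
      have : ∀ k : ℕ, (ENNReal.ofReal (d ((k + 1) ^ 2) ω ^ 2)).toReal
          = d ((k + 1) ^ 2) ω ^ 2 := fun k => ENNReal.toReal_ofReal (sq_nonneg _)
      simpa [this] using hsummable
    have ht := hsummable'.tendsto_atTop_zero
    have := ht.sqrt
    simpa [Real.sqrt_sq (hd0 _ ω)] using this
  -- conclude via interpolation
  filter_upwards [hsub, hG] with ω hωsub hGω
  have hstepnorm : ∀ m, 1 ≤ m → ‖x (m + 1) ω - x m ω‖ ≤ 2 / ((m : ℝ) + 1) := by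
    intro m hm
    rw [hrec m ω]
    have hcm : ‖c (m + 1) ω‖ ≤ 1 := hGω (m + 1) (by omega)
    have hxmω : ‖x m ω‖ ≤ 1 := hxb ω hGω m
    have : x m ω + ((m : ℝ) + 1)⁻¹ • (c (m + 1) ω - x m ω) - x m ω
        = ((m : ℝ) + 1)⁻¹ • (c (m + 1) ω - x m ω) := by abel
    rw [this, norm_smul, Real.norm_eq_abs, abs_of_nonneg (by positivity)]
    rw [div_eq_inv_mul]
    refine mul_le_mul_of_nonneg_left ?_ (by positivity)
    calc ‖c (m + 1) ω - x m ω‖ ≤ ‖c (m + 1) ω‖ + ‖x m ω‖ := norm_sub_le _ _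
      _ ≤ 2 := by linarith
  have hblock : ∀ n, 1 ≤ n → ∀ j, n ^ 2 + j ≤ (n + 1) ^ 2 →
      ‖x (n ^ 2 + j) ω - x (n ^ 2) ω‖ ≤ 2 * j / (n : ℝ) ^ 2 := by
    intro n hn
    have hn2 : 1 ≤ n ^ 2 := Nat.one_le_pow _ _ (by omega)
    have hnR : (1 : ℝ) ≤ (n : ℝ) := by exact_mod_cast hn
    intro j
    induction j with
    | zero => simp
    | succ j ih =>
      intro hle
      have hle' : n ^ 2 + j ≤ (n + 1) ^ 2 := by omega
      have h1 := ih hle'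
      have h2 : ‖x (n ^ 2 + j + 1) ω - x (n ^ 2 + j) ω‖ ≤ 2 / (n : ℝ) ^ 2 := by
        have hm1 : 1 ≤ n ^ 2 + j := by omega
        have := hstepnorm (n ^ 2 + j) hm1
        refine this.trans ?_
        have hcast : ((n ^ 2 + j : ℕ) : ℝ) + 1 = (n : ℝ) ^ 2 + j + 1 := by push_cast; ring
        rw [hcast]
        refine div_le_div_of_nonneg_left (by norm_num) (by positivity) ?_
        have : (0 : ℝ) ≤ (j : ℝ) := by positivity
        linarith
      calc ‖x (n ^ 2 + (j + 1)) ω - x (n ^ 2) ω‖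
          ≤ ‖x (n ^ 2 + j + 1) ω - x (n ^ 2 + j) ω‖ + ‖x (n ^ 2 + j) ω - x (n ^ 2) ω‖ := by
            have h3 : x (n ^ 2 + (j + 1)) ω - x (n ^ 2) ω
                = (x (n ^ 2 + j + 1) ω - x (n ^ 2 + j) ω) + (x (n ^ 2 + j) ω - x (n ^ 2) ω) := by
              have : n ^ 2 + (j + 1) = n ^ 2 + j + 1 := by omega
              rw [this]; abel
            rw [h3]
            exact norm_add_le _ _
        _ ≤ 2 / (n : ℝ) ^ 2 + 2 * j / (n : ℝ) ^ 2 := by linarith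
        _ = 2 * ((j : ℝ) + 1) / (n : ℝ) ^ 2 := by field_simp; ring
        _ = 2 * ((j + 1 : ℕ) : ℝ) / (n : ℝ) ^ 2 := by push_cast; ring
  have hinterp : ∀ n, 1 ≤ n → ∀ m, n ^ 2 ≤ m → m ≤ (n + 1) ^ 2 →
      d m ω ≤ d (n ^ 2) ω + 6 / (n : ℝ) := by
    intro n hn m h1 h2
    obtain ⟨j, rfl⟩ := Nat.exists_eq_add_of_le h1
    have hb := hblock n hn j h2
    have hnR : (1 : ℝ) ≤ (n : ℝ) := by exact_mod_cast hn
    have hlip : d (n ^ 2 + j) ω ≤ d (n ^ 2) ω + ‖x (n ^ 2 + j) ω - x (n ^ 2) ω‖ := by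
      have := infDist_le_infDist_add_dist (x := x (n ^ 2 + j) ω) (y := x (n ^ 2) ω) (s := D)
      simpa [dist_eq_norm] using this
    have hj : (j : ℝ) ≤ 2 * (n : ℝ) + 1 := by
      have : j ≤ 2 * n + 1 := by nlinarith [h2]
      push_cast
      exact_mod_cast this
    have hfr : 2 * (j : ℝ) / (n : ℝ) ^ 2 ≤ 6 / (n : ℝ) := by
      rw [div_le_div_iff₀ (by positivity) (by positivity)]
      nlinarith
    linarith
  -- squeeze
  have hsq : Tendsto (fun n => d (n ^ 2) ω) atTop (𝓝 0) :=
    (tendsto_add_atTop_iff_nat 1).1 hωsub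
  have hsqrt_tendsto : Tendsto (fun m : ℕ => Nat.sqrt m) atTop atTop :=
    tendsto_atTop_atTop.2 fun b => ⟨b * b, fun m hm => Nat.le_sqrt.2 hm⟩
  have t1 : Tendsto (fun m : ℕ => d ((Nat.sqrt m) ^ 2) ω) atTop (𝓝 0) :=
    hsq.comp hsqrt_tendsto
  have t2 : Tendsto (fun m : ℕ => 6 / (Nat.sqrt m : ℝ)) atTop (𝓝 0) :=
    (tendsto_const_div_atTop_nhds_zero_nat 6).comp hsqrt_tendsto
  have t3 : Tendsto (fun m : ℕ => d ((Nat.sqrt m) ^ 2) ω + 6 / (Nat.sqrt m : ℝ)) atTop (𝓝 0) := by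
    have := t1.add t2
    simpa using this
  refine squeeze_zero' (Filter.Eventually.of_forall fun m => hd0 m ω) ?_ t3
  rw [eventually_atTop]
  refine ⟨1, fun m hm => ?_⟩
  have hs1 : 1 ≤ Nat.sqrt m := Nat.le_sqrt.2 (by simpa using hm)
  refine hinterp (Nat.sqrt m) hs1 m (Nat.sqrt_le' m) ?_
  exact le_of_lt (Nat.lt_succ_sqrt' m)
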